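/- Let k ≥ 3. Then for all n ≥ 2, r_n^(k) = Σ_{j=1}^{k−1} r_{n−j}^(k) + d_n^(k), where by convention r_0^(k) = 1, r_1^(k) = 0 and r_j^(k) = 0 for j < 0. -/

import Mathlib

/-- A binary string (list of booleans, `false` = 0, `true` = 1) avoids `0^k`
and `1^k`, i.e. it contains neither `k` consecutive 0's nor `k` consecutive 1's. -/
def Avoids (k : ℕ) (s : List Bool) : Prop :=
  ¬ (List.replicate k false <:+: s) ∧ ¬ (List.replicate k true <:+: s)
/-- `rcount k n = r_n^(k)`: the number of binary strings of length `n` starting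
with 0, ending with 1 and avoiding `0^k` and `1^k` (the empty string counts,
so `rcount k 0 = 1`). -/
noncomputable def rcount (k n : ℕ) : ℕ :=
  Set.ncard {s : List Bool | s.length = n ∧ Avoids k s ∧
    s.head? ≠ some true ∧ s.getLast? ≠ some false}
/-- `r_n^(k)` extended to integer indices by the convention `r_j^(k) = 0` for `j < 0`. -/
noncomputable def rZ (k : ℕ) (n : ℤ) : ℤ :=
  if n < 0 then 0 else rcount k n.toNat
/-- The sequence `d_n^(k)`: `1` if `n ≡ 0 (mod k)`, `−1` if `n ≡ 1 (mod k)`,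
and `0` otherwise. -/
def dseq (k n : ℕ) : ℤ :=
  if n % k = 0 then 1 else if n % k = 1 then -1 else 0

namespace RcountRec

lemma head?_rep_append {c : Bool} {m : ℕ} (hm : 1 ≤ m) (v : List Bool) :
    (List.replicate m c ++ v).head? = some c := by
  cases m with
  | zero => omega
  | succ m => simp [List.replicate_succ]

lemma getLast?_replicate_pos {c : Bool} {a : ℕ} (ha : 1 ≤ a) :
    (List.replicate a c).getLast? = some c := by
  cases a with
  | zero => omega
  | succ a => rw [List.replicate_succ', List.getLast?_concat]

lemma avoids_rep {k : ℕ} {s : List Bool} (hA : Avoids k s) (c : Bool) :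
    ¬ (List.replicate k c <:+: s) := by
  cases c
  · exact hA.1
  · exact hA.2

lemma avoids_of_infix {k : ℕ} {s t : List Bool} (h : t <:+: s) (hA : Avoids k s) :
    Avoids k t :=
  ⟨fun hc => hA.1 (hc.trans h), fun hc => hA.2 (hc.trans h)⟩

lemma avoids_nil {k : ℕ} (hk : 1 ≤ k) : Avoids k ([] : List Bool) := by
  constructor <;> intro h <;>
    (have := h.length_le; simp at this; omega)

lemma infix_cross {c : Bool} {k a : ℕ} {t : List Bool} (hk : 1 ≤ k)
    (h : List.replicate k c <:+: List.replicate a (!c) ++ t) :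
    List.replicate k c <:+: t := by
  obtain ⟨u, v, huv⟩ := h
  rcases le_or_gt a u.length with hle | hlt
  · refine ⟨u.drop a, v, ?_⟩
    have := congrArg (List.drop a) huv
    rwa [List.append_assoc, List.drop_append_of_le_length hle,
      List.drop_left' (by simp), ← List.append_assoc] at this
  · exfalso
    have := congrArg (List.drop u.length) huv
    rw [List.append_assoc, List.drop_left,
      List.drop_append_of_le_length (le_of_lt (by simpa using hlt)),
      List.drop_replicate] at this
    have h1 : (List.replicate k c ++ v).head? = some c := head?_rep_append hk v
    have h2 : (List.replicate (a - u.length) (!c) ++ t).head? = some (!c) :=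
      head?_rep_append (by omega) t
    rw [this, h2] at h1
    simp at h1

lemma infix_same {c : Bool} {k a : ℕ} {t : List Bool} (hak : a < k)
    (hhead : t.head? ≠ some c)
    (h : List.replicate k c <:+: List.replicate a c ++ t) :
    List.replicate k c <:+: t := by
  obtain ⟨u, v, huv⟩ := h
  rcases le_or_gt a u.length with hle | hlt
  · refine ⟨u.drop a, v, ?_⟩
    have := congrArg (List.drop a) huv
    rwa [List.append_assoc, List.drop_append_of_le_length hle,
      List.drop_left' (by simp), ← List.append_assoc] at this
  · exfalso
    have := congrArg (List.drop u.length) huv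
    rw [List.append_assoc, List.drop_left,
      List.drop_append_of_le_length (le_of_lt (by simpa using hlt)),
      List.drop_replicate] at this
    -- now replicate k c ++ v = replicate (a - u.length) c ++ t
    have h2 := congrArg (List.drop (a - u.length)) this
    rw [List.drop_append_of_le_length (by simp; omega),
      List.drop_replicate, List.drop_left' (by simp)] at h2
    have h1 : (List.replicate (k - (a - u.length)) c ++ v).head? = some c :=
      head?_rep_append (by omega) v
    rw [h2] at h1
    exact hhead h1

lemma avoids_build {k a : ℕ} (hk : 1 ≤ k) {c : Bool} {t : List Bool}
    (hak : a < k) (ht : t.head? ≠ some c) (hA : Avoids k t) :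
    Avoids k (List.replicate a c ++ t) := by
  have key : ∀ c' : Bool, ¬ (List.replicate k c' <:+: List.replicate a c ++ t) := by
    intro c' hinf
    by_cases hcc : c' = c
    · subst hcc
      exact avoids_rep hA c' (infix_same hak ht hinf)
    · have hcc' : c = !c' := by cases c <;> cases c' <;> simp_all
      rw [hcc'] at hinf
      exact avoids_rep hA c' (infix_cross hk hinf)
  exact ⟨key false, key true⟩

lemma rep_append_eq_iff {c : Bool} {a a' : ℕ} {t t' : List Bool}
    (h1 : t.head? ≠ some c) (h2 : t'.head? ≠ some c)
    (heq : List.replicate a c ++ t = List.replicate a' c ++ t') : a = a' ∧ t = t' := by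
  induction a generalizing a' with
  | zero =>
    cases a' with
    | zero => simpa using heq
    | succ b =>
      exfalso
      rw [List.replicate_succ] at heq
      simp only [List.replicate, List.nil_append, List.cons_append] at heq
      apply h1
      rw [heq]
      simp
  | succ a ih =>
    cases a' with
    | zero =>
      exfalso
      rw [List.replicate_succ] at heq
      simp only [List.replicate, List.nil_append, List.cons_append] at heq
      apply h2
      rw [← heq]
      simp
    | succ b =>
      rw [List.replicate_succ, List.replicate_succ] at heq
      simp only [List.cons_append, List.cons.injEq, true_and] at heq
      obtain ⟨hab, htt⟩ := ih heq
      exact ⟨by omega, htt⟩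

lemma split_run {k : ℕ} {c : Bool} {s : List Bool}
    (hs : s.head? = some c) (hA : Avoids k s) :
    ∃ a t, 1 ≤ a ∧ a ≤ k - 1 ∧ s = List.replicate a c ++ t ∧ t.head? ≠ some c := by
  classical
  set p : Bool → Bool := fun x => x == c with hp
  refine ⟨(s.takeWhile p).length, s.dropWhile p, ?_, ?_, ?_, ?_⟩
  · -- 1 ≤ a
    obtain ⟨x, xs, rfl⟩ : ∃ x xs, s = x :: xs := by
      cases s with
      | nil => simp at hs
      | cons x xs => exact ⟨x, xs, rfl⟩
    have hx : x = c := by simpa using hs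
    subst hx
    simp [List.takeWhile_cons, hp]
  · -- a ≤ k - 1
    by_contra hcon
    push_neg at hcon
    have hk1 : 1 ≤ k := by
      by_contra hk0
      push_neg at hk0
      interval_cases k
      · exact avoids_rep hA c (by simp)
    have hrep : s.takeWhile p = List.replicate (s.takeWhile p).length c := by
      rw [List.eq_replicate_iff]
      refine ⟨rfl, fun b hb => by simpa [hp] using List.mem_takeWhile_imp hb⟩
    have hpre : List.replicate k c <+: s := by
      have h1 : List.replicate k c <+: s.takeWhile p := by
        rw [hrep]
        have : (k + ((s.takeWhile p).length - k)) = (s.takeWhile p).length := by omega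
        refine ⟨List.replicate ((s.takeWhile p).length - k) c, ?_⟩
        rw [← List.replicate_add, this]
      exact h1.trans (List.takeWhile_prefix p)
    exact avoids_rep hA c hpre.isInfix
  · -- s = replicate a c ++ t
    conv_lhs => rw [← List.takeWhile_append_dropWhile (p := p) (l := s)]
    congr 1
    rw [List.eq_replicate_iff]
    exact ⟨rfl, fun b hb => by simpa [hp] using List.mem_takeWhile_imp hb⟩
  · -- head of rest
    intro hh
    cases hd : s.dropWhile p with
    | nil => rw [hd] at hh; simp at hh
    | cons y ys =>
      rw [hd] at hh
      simp only [List.head?_cons, Option.some.injEq] at hh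
      subst hh
      have := List.dropWhile_get_zero_not p s (by rw [hd]; simp)
      rw [List.get_of_eq hd] at this
      simp [hp] at this



noncomputable def bcount (k n : ℕ) : ℕ :=
  Set.ncard {s : List Bool | s.length = n ∧ Avoids k s ∧
    s.head? = some true ∧ s.getLast? = some true}

lemma finite_of_length (n : ℕ) (S : Set (List Bool))
    (h : ∀ s ∈ S, s.length = n) : S.Finite :=
  (List.finite_length_eq Bool n).subset h

lemma ncard_biUnion {ι : Type*} [DecidableEq ι] (s : Finset ι) (f : ι → Set (List Bool))
    (hfin : ∀ i ∈ s, (f i).Finite)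
    (hdisj : ∀ i ∈ s, ∀ j ∈ s, i ≠ j → Disjoint (f i) (f j)) :
    (⋃ i ∈ s, f i).ncard = ∑ i ∈ s, (f i).ncard := by
  induction s using Finset.induction with
  | empty => simp
  | insert _ _ hni ih =>
    rename_i a s
    rw [Finset.sum_insert hni]
    have hU : (⋃ i ∈ insert a s, f i) = f a ∪ ⋃ i ∈ s, f i := by
      simp [Set.iUnion_iUnion_eq_or_left]
    rw [hU, Set.ncard_union_eq ?_ ?_ ?_]
    · rw [ih (fun i hi => hfin i (Finset.mem_insert_of_mem hi))
        (fun i hi j hj hij => hdisj i (Finset.mem_insert_of_mem hi) j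
          (Finset.mem_insert_of_mem hj) hij)]
    · rw [Set.disjoint_iUnion_right]
      intro i
      rw [Set.disjoint_iUnion_right]
      intro hi
      exact hdisj a (Finset.mem_insert_self a s) i (Finset.mem_insert_of_mem hi)
        (fun h => hni (h ▸ hi))
    · exact hfin a (Finset.mem_insert_self a s)
    · exact Set.Finite.biUnion (Finset.finite_toSet s)
        (fun i hi => hfin i (Finset.mem_insert_of_mem hi))


lemma L1nat {k n : ℕ} (hk : 3 ≤ k) (hn : 1 ≤ n) :
    rcount k n = ∑ a ∈ Finset.Icc 1 (k-1), bcount k (n - a) := by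
  classical
  set B : ℕ → Set (List Bool) := fun m => {t | t.length = m ∧ Avoids k t ∧
    t.head? = some true ∧ t.getLast? = some true} with hB
  have hBfin : ∀ m, (B m).Finite := fun m => finite_of_length m _ (fun s hs => hs.1)
  have hset : {s : List Bool | s.length = n ∧ Avoids k s ∧
      s.head? ≠ some true ∧ s.getLast? ≠ some false}
      = ⋃ a ∈ (Finset.Icc 1 (k-1) : Finset ℕ),
        (fun t => List.replicate a false ++ t) '' B (n - a) := by
    ext s
    simp only [Set.mem_setOf_eq, Set.mem_iUnion, Finset.mem_Icc, Set.mem_image, hB,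
      exists_prop]
    constructor
    · rintro ⟨hlen, hA, hh, hl⟩
      have hs0 : s.head? = some false := by
        cases hsc : s.head? with
        | none =>
          rw [List.head?_eq_none_iff] at hsc
          subst hsc; simp at hlen; omega
        | some b =>
          cases b with
          | false => rfl
          | true => exact absurd hsc hh
      obtain ⟨a, t, ha1, hak, hst, hth⟩ := split_run hs0 hA
      have htne : t ≠ [] := by
        rintro rfl
        rw [List.append_nil] at hst
        exact hl (by rw [hst]; exact getLast?_replicate_pos ha1)
      have hthead : t.head? = some true := by
        cases htc : t.head? with
        | none => rw [List.head?_eq_none_iff] at htc; exact absurd htc htne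
        | some b =>
          cases b with
          | false => exact absurd htc (by rw [htc] at hth ⊢; exact hth)
          | true => rfl
      have hslast : s.getLast? = t.getLast? := by
        rw [hst, List.getLast?_append]
        cases htc : t.getLast? with
        | none => rw [List.getLast?_eq_none_iff] at htc; exact absurd htc htne
        | some y => rfl
      have htlast : t.getLast? = some true := by
        cases htc : t.getLast? with
        | none => rw [List.getLast?_eq_none_iff] at htc; exact absurd htc htne
        | some y =>
          cases y with
          | false => rw [hslast, htc] at hl; exact absurd rfl hl
          | true => rfl
      have hlena : s.length = a + t.length := by rw [hst]; simp
      refine ⟨a, ⟨ha1, hak⟩, t, ⟨by omega, ?_, hthead, htlast⟩, hst.symm⟩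
      exact avoids_of_infix ⟨List.replicate a false, [], by simp [hst]⟩ hA
    · rintro ⟨a, ⟨ha1, hak⟩, t, ⟨htl, htA, hth, htla⟩, rfl⟩
      have htne : t ≠ [] := by
        rintro rfl
        simp at hth
      have han : a < n := by
        have : t.length ≠ 0 := fun h => htne (List.length_eq_zero_iff.mp h)
        omega
      refine ⟨?_, ?_, ?_, ?_⟩
      · simp only [List.length_append, List.length_replicate, htl]; omega
      · exact avoids_build (by omega) (by omega) (by rw [hth]; simp) htA
      · rw [head?_rep_append ha1]; simp
      · rw [List.getLast?_append, htla]; simp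
  rw [rcount, hset, ncard_biUnion]
  · refine Finset.sum_congr rfl (fun a _ => ?_)
    rw [Set.ncard_image_of_injective _ (List.append_right_injective _)]
    rfl
  · intro a _
    exact ((hBfin (n-a)).image _)
  · intro a _ b _ hab
    rw [Set.disjoint_left]
    rintro s ⟨t, ⟨_, _, hth, _⟩, rfl⟩ ⟨t', ⟨_, _, hth', _⟩, heq⟩
    exact hab ((rep_append_eq_iff (by rw [hth']; simp) (by rw [hth]; simp) heq).1).symm

lemma L2nat {k m : ℕ} (hk : 3 ≤ k) (hm : 1 ≤ m) :
    bcount k m = ∑ j ∈ Finset.Icc 1 (min (k-1) m), rcount k (m - j) := by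
  classical
  set A : ℕ → Set (List Bool) := fun l => {t | t.length = l ∧ Avoids k t ∧
    t.head? ≠ some true ∧ t.getLast? ≠ some false} with hA'
  have hAfin : ∀ l, (A l).Finite := fun l => finite_of_length l _ (fun s hs => hs.1)
  have hset : {s : List Bool | s.length = m ∧ Avoids k s ∧
      s.head? = some true ∧ s.getLast? = some true}
      = ⋃ j ∈ (Finset.Icc 1 (min (k-1) m) : Finset ℕ),
        (fun t => List.replicate j true ++ t) '' A (m - j) := by
    ext s
    simp only [Set.mem_setOf_eq, Set.mem_iUnion, Finset.mem_Icc, Set.mem_image, hA',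
      exists_prop]
    constructor
    · rintro ⟨hlen, hA, hh, hl⟩
      obtain ⟨a, t, ha1, hak, hst, hth⟩ := split_run hh hA
      have hlena : s.length = a + t.length := by rw [hst]; simp
      have htlast : t.getLast? ≠ some false := by
        cases htc : t.getLast? with
        | none => simp
        | some y =>
          have htne : t ≠ [] := by
            rintro rfl; simp at htc
          have hslast : s.getLast? = t.getLast? := by
            rw [hst, List.getLast?_append, htc]; rfl
          rw [hslast, htc] at hl
          simp only [Option.some.injEq] at hl
          subst hl
          simp
      refine ⟨a, ⟨ha1, ?_⟩, t, ⟨by omega, ?_, hth, htlast⟩, hst.symm⟩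
      · omega
      · exact avoids_of_infix ⟨List.replicate a true, [], by simp [hst]⟩ hA
    · rintro ⟨j, ⟨hj1, hjm⟩, t, ⟨htl, htA, hth, htla⟩, rfl⟩
      have hjm' : j ≤ m := by omega
      refine ⟨?_, ?_, ?_, ?_⟩
      · simp only [List.length_append, List.length_replicate, htl]; omega
      · exact avoids_build (by omega) (by omega) hth htA
      · exact head?_rep_append hj1 t
      · rw [List.getLast?_append]
        cases htc : t.getLast? with
        | none => simp [getLast?_replicate_pos hj1]
        | some y =>
          cases y with
          | false => rw [htc] at htla; exact absurd rfl htla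
          | true => rfl
  rw [bcount, hset, ncard_biUnion]
  · refine Finset.sum_congr rfl (fun a _ => ?_)
    rw [Set.ncard_image_of_injective _ (List.append_right_injective _)]
    rfl
  · intro a _
    exact ((hAfin (m-a)).image _)
  · intro a _ b _ hab
    rw [Set.disjoint_left]
    rintro s ⟨t, ⟨_, _, hth, _⟩, rfl⟩ ⟨t', ⟨_, _, hth', _⟩, heq⟩
    exact hab ((rep_append_eq_iff hth' hth heq).1).symm

lemma rcount_zero {k : ℕ} (hk : 1 ≤ k) : rcount k 0 = 1 := by
  have : {s : List Bool | s.length = 0 ∧ Avoids k s ∧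
      s.head? ≠ some true ∧ s.getLast? ≠ some false} = {([] : List Bool)} := by
    ext s
    simp only [Set.mem_setOf_eq, Set.mem_singleton_iff, List.length_eq_zero_iff]
    constructor
    · rintro ⟨h, -, -, -⟩; exact h
    · rintro rfl
      exact ⟨rfl, avoids_nil hk, by simp, by simp⟩
  rw [rcount, this, Set.ncard_singleton]

lemma bcount_zero {k : ℕ} : bcount k 0 = 0 := by
  have : {s : List Bool | s.length = 0 ∧ Avoids k s ∧
      s.head? = some true ∧ s.getLast? = some true} = ∅ := by
    ext s
    simp only [Set.mem_setOf_eq, Set.mem_empty_iff_false, iff_false, not_and,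
      List.length_eq_zero_iff]
    rintro rfl
    simp
  rw [bcount, this, Set.ncard_empty]


noncomputable def bZ (k : ℕ) (m : ℤ) : ℤ := if m < 0 then 0 else bcount k m.toNat

noncomputable def dZ (k : ℕ) (m : ℤ) : ℤ := if m < 0 then 0 else dseq k m.toNat

lemma rZ_coe (k n : ℕ) : rZ k (n : ℤ) = rcount k n := by
  rw [rZ, if_neg (by omega)]
  simp

lemma dZ_coe (k n : ℕ) : dZ k (n : ℤ) = dseq k n := by
  rw [dZ, if_neg (by omega)]
  simp

lemma bZ_coe_sub (k n a : ℕ) : bZ k ((n:ℤ) - a) = bcount k (n - a) := by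
  by_cases h : (n:ℤ) - a < 0
  · rw [bZ, if_pos h, show n - a = 0 by omega, bcount_zero]
    simp
  · rw [bZ, if_neg h, show ((n:ℤ) - a).toNat = n - a by omega]

lemma rZ_coe_sub (k : ℕ) {n a : ℕ} (h : a ≤ n) : rZ k ((n:ℤ) - a) = rcount k (n - a) := by
  rw [rZ, if_neg (by omega), show ((n:ℤ) - a).toNat = n - a by omega]

lemma L1Z {k : ℕ} (hk : 3 ≤ k) (m : ℤ) :
    rZ k m = ∑ a ∈ Finset.Icc 1 (k-1), bZ k (m - a) + (if m = 0 then 1 else 0) := by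
  rcases lt_trichotomy m 0 with h | h | h
  · rw [rZ, if_pos h, if_neg (by omega), Finset.sum_eq_zero, add_zero]
    intro a ha
    rw [bZ, if_pos (by simp only [Finset.mem_Icc] at ha; omega)]
  · subst h
    have hsum : ∑ a ∈ Finset.Icc 1 (k-1), bZ k ((0:ℤ) - a) = 0 :=
      Finset.sum_eq_zero (fun a ha => by
        rw [bZ, if_pos (by simp only [Finset.mem_Icc] at ha; omega)])
    rw [hsum, zero_add, if_pos rfl, rZ, if_neg (by omega)]
    norm_num [rcount_zero (show 1 ≤ k by omega)]
  · obtain ⟨n, rfl⟩ := Int.eq_ofNat_of_zero_le (le_of_lt h)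
    have hn : 1 ≤ n := by omega
    rw [rZ_coe, if_neg (by omega), add_zero, L1nat hk hn, Nat.cast_sum]
    exact Finset.sum_congr rfl (fun a _ => (bZ_coe_sub k n a).symm)

lemma L2Z {k : ℕ} (hk : 3 ≤ k) (m : ℤ) :
    bZ k m = ∑ j ∈ Finset.Icc 1 (k-1), rZ k (m - j) := by
  rcases lt_trichotomy m 0 with h | h | h
  · rw [bZ, if_pos h, eq_comm, Finset.sum_eq_zero]
    intro a ha
    rw [rZ, if_pos (by simp only [Finset.mem_Icc] at ha; omega)]
  · subst h
    rw [bZ, if_neg (by omega)]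
    simp only [Int.toNat_zero, bcount_zero]
    rw [eq_comm, Finset.sum_eq_zero]
    · simp
    · intro a ha
      rw [rZ, if_pos (by simp only [Finset.mem_Icc] at ha; omega)]
  · obtain ⟨n, rfl⟩ := Int.eq_ofNat_of_zero_le (le_of_lt h)
    have hn : 1 ≤ n := by omega
    rw [bZ, if_neg (by omega), show ((n:ℤ)).toNat = n by omega, L2nat hk hn,
      Nat.cast_sum]
    have h1 : ∀ j ∈ Finset.Icc 1 (min (k-1) n), ((rcount k (n - j) : ℤ)) = rZ k ((n:ℤ) - j) :=
      fun j hj => by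
        simp only [Finset.mem_Icc] at hj
        exact (rZ_coe_sub k (le_trans hj.2 (min_le_right _ _))).symm
    rw [Finset.sum_congr rfl h1]
    refine Finset.sum_subset (Finset.Icc_subset_Icc_right (min_le_left _ _)) ?_
    intro j hj hj'
    simp only [Finset.mem_Icc] at hj hj'
    rw [rZ, if_pos (by omega)]

lemma sum_Icc_one (k : ℕ) (g : ℕ → ℤ) :
    ∑ j ∈ Finset.Icc 1 (k-1), g j = ∑ i ∈ Finset.range (k-1), g (1+i) := by
  have hmap : Finset.Icc 1 (k-1)
      = Finset.map ⟨fun i => 1 + i, fun a b h => by simpa using h⟩ (Finset.range (k-1)) := by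
    ext x
    simp only [Finset.mem_Icc, Finset.mem_map, Finset.mem_range,
      Function.Embedding.coeFn_mk]
    constructor
    · rintro ⟨h1, h2⟩; exact ⟨x - 1, by omega, by show 1 + (x - 1) = x; omega⟩
    · rintro ⟨i, hi, rfl⟩; show 1 ≤ 1 + i ∧ 1 + i ≤ k - 1; omega
  rw [hmap, Finset.sum_map]
  rfl

lemma dsum {k : ℕ} (hk : 3 ≤ k) (n : ℕ) :
    ∑ j ∈ Finset.Icc 1 (k-1), dZ k ((n:ℤ) - j) = (if n = 0 then 1 else 0) - dseq k n := by
  obtain ⟨K, rfl⟩ : ∃ K, k = K + 1 := ⟨k - 1, by omega⟩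
  have hK : 2 ≤ K := by omega
  have hfull : ∀ m : ℕ, ∑ j ∈ Finset.range (K+1), dZ (K+1) ((m:ℤ) - j)
      = if m = 0 then 1 else 0 := by
    intro m
    induction m with
    | zero =>
      rw [Finset.sum_range_succ']
      have e1 : ∑ i ∈ Finset.range K, dZ (K+1) (((0:ℕ):ℤ) - ↑(i+1)) = 0 :=
        Finset.sum_eq_zero fun i _ => by rw [dZ, if_pos (by push_cast; omega)]
      rw [e1, zero_add]
      norm_num [dZ, dseq]
    | succ m ih =>
      have hs1 : ∑ j ∈ Finset.range (K+1), dZ (K+1) ((↑(m+1):ℤ) - ↑j)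
          = ∑ i ∈ Finset.range K, dZ (K+1) ((m:ℤ) - ↑i) + dZ (K+1) (↑(m+1)) := by
        rw [Finset.sum_range_succ']
        simp only [Nat.cast_zero, sub_zero]
        congr 1
        refine Finset.sum_congr rfl fun i _ => ?_
        congr 1
        push_cast
        ring
      have hs2 : ∑ j ∈ Finset.range (K+1), dZ (K+1) ((m:ℤ) - ↑j)
          = ∑ i ∈ Finset.range K, dZ (K+1) ((m:ℤ) - ↑i) + dZ (K+1) ((m:ℤ) - ↑K) := by
        rw [Finset.sum_range_succ]
      have key : ∑ j ∈ Finset.range (K+1), dZ (K+1) ((↑(m+1):ℤ) - ↑j)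
          = (if m = 0 then 1 else 0) + dZ (K+1) (↑(m+1)) - dZ (K+1) ((m:ℤ) - ↑K) := by
        rw [hs1, ← ih, hs2]
        ring
      rw [key, if_neg (by omega : ¬ m + 1 = 0)]
      by_cases hnk : K + 1 ≤ m + 1
      · have e1 : dZ (K+1) ((↑(m+1):ℤ)) = dseq (K+1) (m+1) := dZ_coe _ _
        have e2 : dZ (K+1) ((m:ℤ) - ↑K) = dseq (K+1) (m - K) := by
          rw [show ((m:ℤ) - ↑K) = ((m - K : ℕ) : ℤ) by omega, dZ_coe]
        have e3 : dseq (K+1) (m+1) = dseq (K+1) (m - K) := by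
          rw [dseq, dseq, Nat.mod_eq_sub_mod hnk, show m + 1 - (K+1) = m - K by omega]
        rw [e1, e2, e3, if_neg (by omega : ¬ m = 0)]
        ring
      · push_neg at hnk
        have e2 : dZ (K+1) ((m:ℤ) - ↑K) = 0 := by rw [dZ, if_pos (by omega)]
        have e1 : dZ (K+1) ((↑(m+1):ℤ)) = dseq (K+1) (m+1) := dZ_coe _ _
        have hmod : (m+1) % (K+1) = m+1 := Nat.mod_eq_of_lt (by omega)
        rw [e1, e2, sub_zero, dseq, hmod]
        by_cases hm0 : m = 0
        · subst hm0
          rw [if_pos rfl, if_neg (by omega), if_pos rfl]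
          ring
        · rw [if_neg hm0, if_neg (by omega), if_neg (by omega)]
          ring
  have hsplit : ∑ j ∈ Finset.range (K+1), dZ (K+1) ((n:ℤ) - ↑j)
      = ∑ i ∈ Finset.range K, dZ (K+1) ((n:ℤ) - ↑(1+i)) + dseq (K+1) n := by
    rw [Finset.sum_range_succ']
    simp only [Nat.cast_zero, sub_zero, dZ_coe]
    congr 1
    refine Finset.sum_congr rfl fun i _ => ?_
    rw [show 1 + i = i + 1 by omega]
  have hIcc := sum_Icc_one (K+1) (fun j => dZ (K+1) ((n:ℤ) - ↑j))
  simp only [Nat.add_sub_cancel] at hIcc ⊢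
  rw [hIcc]
  linarith [hsplit, hfull n]

lemma Gnat {k : ℕ} (hk : 3 ≤ k) : ∀ n : ℕ, bZ k (n:ℤ) - rZ k (n:ℤ) = - dZ k (n:ℤ) := by
  intro n
  induction n using Nat.strong_induction_on with
  | _ n ih =>
    have key : ∀ j ∈ Finset.Icc 1 (k-1), rZ k ((n:ℤ) - j)
        = bZ k ((n:ℤ) - j) + dZ k ((n:ℤ) - j) := by
      intro j hj
      simp only [Finset.mem_Icc] at hj
      rcases le_or_gt j n with h | h
      · have hcast : ((n:ℤ) - j) = ((n - j : ℕ) : ℤ) := by push_cast [Nat.cast_sub h]; ring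
        rw [hcast]
        have := ih (n - j) (by omega)
        linarith
      · rw [rZ, if_pos (by omega), bZ, if_pos (by omega), dZ, if_pos (by omega)]
        ring
    have e1 := L2Z hk (n:ℤ)
    have e2 := L1Z hk (n:ℤ)
    have e3 : ∑ j ∈ Finset.Icc 1 (k-1), rZ k ((n:ℤ) - j)
        = ∑ j ∈ Finset.Icc 1 (k-1), bZ k ((n:ℤ) - j)
          + ∑ j ∈ Finset.Icc 1 (k-1), dZ k ((n:ℤ) - j) := by
      rw [← Finset.sum_add_distrib]
      exact Finset.sum_congr rfl key
    have e4 := dsum hk n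
    have e5 : ((if (n:ℤ) = 0 then (1:ℤ) else 0)) = (if n = 0 then (1:ℤ) else 0) := by
      by_cases h : n = 0
      · subst h; simp
      · rw [if_neg (by omega : ¬ (n:ℤ) = 0), if_neg h]
    rw [e5] at e2
    rw [e3, e4] at e1
    rw [dZ_coe]
    linarith

lemma GZ {k : ℕ} (hk : 3 ≤ k) (m : ℤ) : bZ k m = rZ k m - dZ k m := by
  rcases lt_or_ge m 0 with h | h
  · rw [bZ, if_pos h, rZ, if_pos h, dZ, if_pos h]; ring
  · obtain ⟨n, rfl⟩ := Int.eq_ofNat_of_zero_le h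
    have := Gnat hk n
    linarith

theorem main {k : ℕ} (hk : 3 ≤ k) :
    ∀ n : ℕ, 2 ≤ n →
      rZ k n = ∑ j ∈ Finset.Icc 1 (k - 1), rZ k ((n : ℤ) - j) + dseq k n := by
  intro n hn
  have e2 := L1Z hk (n:ℤ)
  rw [if_neg (by omega : ¬ (n:ℤ) = 0), add_zero] at e2
  have e3 : ∑ a ∈ Finset.Icc 1 (k-1), bZ k ((n:ℤ) - a)
      = ∑ a ∈ Finset.Icc 1 (k-1), rZ k ((n:ℤ) - a)
        - ∑ a ∈ Finset.Icc 1 (k-1), dZ k ((n:ℤ) - a) := by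
    rw [← Finset.sum_sub_distrib]
    exact Finset.sum_congr rfl (fun a _ => GZ hk _)
  have e4 := dsum hk n
  rw [if_neg (by omega : ¬ n = 0)] at e4
  rw [e2, e3, e4]
  ring

end RcountRec

/-- `r_n^(k) = Σ_{j=1}^{k−1} r_{n−j}^(k) + d_n^(k)` for `n ≥ 2`. -/
theorem rcount_recurrence_d (k : ℕ) (hk : 3 ≤ k) :
    ∀ n : ℕ, 2 ≤ n →
      rZ k n = ∑ j ∈ Finset.Icc 1 (k - 1), rZ k ((n : ℤ) - j) + dseq k n := by
  exact RcountRec.main hk
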